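/- Let P_i and P_j be joint distributions on X₁ × X₂ × {0,1} with P_i(x₁,x₂) > 0 and P_j(x₁,x₂) > 0 for all (x₁,x₂), and suppose 0 < α_j^i < 1. Fix (x₁,x₂) and assume Σ_{y'} P_i(y'|x₁,x₂)·P_j(y'|x₁,x₂) > 0 and Σ_{y'} P_i(1−y'|x₁,x₂)·P_j(y'|x₁,x₂) > 0. Then the label conditionals of the partition distributions satisfy P_j^{i✓}(y|x₁,x₂) = P_i(y|x₁,x₂)·P_j(y|x₁,x₂) / Σ_{y'} P_i(y'|x₁,x₂)·P_j(y'|x₁,x₂) and P_j^{i×}(y|x₁,x₂) = P_i(1−y|x₁,x₂)·P_j(y|x₁,x₂) / Σ_{y'} P_i(1−y'|x₁,x₂)·P_j(y'|x₁,x₂) for each y ∈ {0,1}. -/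

import Mathlib

open Finset

/-- A (joint) distribution on a finite type: nonnegative and summing to 1. -/
def IsDist {S : Type*} [Fintype S] (P : S → ℝ) : Prop :=
  (∀ s, 0 ≤ P s) ∧ ∑ s, P s = 1

/-- The (X₁, X₂)-marginal `P(x₁, x₂) = P(x₁,x₂,0) + P(x₁,x₂,1)`. -/
def margXY {X₁ X₂ : Type*} (P : X₁ × X₂ × Fin 2 → ℝ) (x₁ : X₁) (x₂ : X₂) : ℝ :=
  P (x₁, x₂, 0) + P (x₁, x₂, 1)

/-- The conditional `P(y | x₁, x₂) = P(x₁,x₂,y) / P(x₁,x₂)`. -/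
noncomputable def condY {X₁ X₂ : Type*} (P : X₁ × X₂ × Fin 2 → ℝ)
    (y : Fin 2) (x₁ : X₁) (x₂ : X₂) : ℝ :=
  P (x₁, x₂, y) / margXY P x₁ x₂

/-- `α_j^i = Σ_{x₁,x₂,y} P_j(x₁,x₂,y) · P_i(y | x₁,x₂)`,
the probability that the classifier derived from `Pi` is correct on `Pj`. -/
noncomputable def alphaP {X₁ X₂ : Type*} [Fintype X₁] [Fintype X₂]
    (Pi' Pj' : X₁ × X₂ × Fin 2 → ℝ) : ℝ :=
  ∑ x₁ : X₁, ∑ x₂ : X₂, ∑ y : Fin 2, Pj' (x₁, x₂, y) * condY Pi' y x₁ x₂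

/-- The correct-prediction partition `P_j^{i✓}(x₁,x₂,y) = P_j(x₁,x₂,y)·P_i(y|x₁,x₂)/α_j^i`. -/
noncomputable def partC {X₁ X₂ : Type*} [Fintype X₁] [Fintype X₂]
    (Pi' Pj' : X₁ × X₂ × Fin 2 → ℝ) (z : X₁ × X₂ × Fin 2) : ℝ :=
  Pj' z * condY Pi' z.2.2 z.1 z.2.1 / alphaP Pi' Pj'

/-- The wrong-prediction partition `P_j^{i×}(x₁,x₂,y) = P_j(x₁,x₂,y)·P_i(1−y|x₁,x₂)/(1−α_j^i)`. -/
noncomputable def partW {X₁ X₂ : Type*} [Fintype X₁] [Fintype X₂]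
    (Pi' Pj' : X₁ × X₂ × Fin 2 → ℝ) (z : X₁ × X₂ × Fin 2) : ℝ :=
  Pj' z * condY Pi' (1 - z.2.2) z.1 z.2.1 / (1 - alphaP Pi' Pj')

/-- `Cov(X₂, Y; P)` where the value of `x₂` is `v x₂` and `y ∈ {0,1} ⊆ ℝ`. -/
noncomputable def covXY {X₁ X₂ : Type*} [Fintype X₁] [Fintype X₂] (v : X₂ → ℝ)
    (P : X₁ × X₂ × Fin 2 → ℝ) : ℝ :=
  (∑ z : X₁ × X₂ × Fin 2, v z.2.1 * ((z.2.2 : ℕ) : ℝ) * P z)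
    - (∑ z : X₁ × X₂ × Fin 2, v z.2.1 * P z)
      * (∑ z : X₁ × X₂ × Fin 2, ((z.2.2 : ℕ) : ℝ) * P z)

/-- The Y-marginal of `P` is uniform. -/
def uniformY {X₁ X₂ : Type*} [Fintype X₁] [Fintype X₂] (P : X₁ × X₂ × Fin 2 → ℝ) : Prop :=
  ∀ y : Fin 2, ∑ x₁ : X₁, ∑ x₂ : X₂, P (x₁, x₂, y) = 1 / 2

/-- Under a uniform Y-marginal, `P(x₂ | y) = 2 · Σ_{x₁} P(x₁,x₂,y)`. -/
noncomputable def condX2Y {X₁ X₂ : Type*} [Fintype X₁] (P : X₁ × X₂ × Fin 2 → ℝ)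
    (x₂ : X₂) (y : Fin 2) : ℝ :=
  2 * ∑ x₁ : X₁, P (x₁, x₂, y)

/-- `X₂` is independent of `X₁` given `Y` under `P`. -/
def condIndep {X₁ X₂ : Type*} [Fintype X₁] [Fintype X₂] (P : X₁ × X₂ × Fin 2 → ℝ) : Prop :=
  ∀ (x₁ : X₁) (x₂ : X₂) (y : Fin 2),
    P (x₁, x₂, y) * (∑ x₁' : X₁, ∑ x₂' : X₂, P (x₁', x₂', y))
      = (∑ x₂' : X₂, P (x₁, x₂', y)) * (∑ x₁' : X₁, P (x₁', x₂, y))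


private lemma stmt2_aux1 (A B C D m n a : ℝ) (hm : m ≠ 0) (hn : n ≠ 0) (ha : a ≠ 0) :
    C * (A / m) / a / (C * (A / m) / a + D * (B / m) / a)
      = A / m * (C / n) / (A / m * (C / n) + B / m * (D / n)) := by
  rw [← add_div, div_div_div_cancel_right₀,
    show C * (A / m) = C * A / m from by ring,
    show D * (B / m) = D * B / m from by ring,
    ← add_div, div_div_div_cancel_right₀,
    show A / m * (C / n) = A * C / (m * n) from by ring,
    show B / m * (D / n) = B * D / (m * n) from by ring,
    ← add_div, div_div_div_cancel_right₀, mul_comm C A, mul_comm D B] <;>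
    first | exact ha | exact hm | exact mul_ne_zero hm hn

private lemma stmt2_aux2 (A B C D m n a : ℝ) (hm : m ≠ 0) (hn : n ≠ 0) (ha : a ≠ 0) :
    D * (B / m) / a / (C * (A / m) / a + D * (B / m) / a)
      = B / m * (D / n) / (A / m * (C / n) + B / m * (D / n)) := by
  rw [← add_div, div_div_div_cancel_right₀,
    show C * (A / m) = C * A / m from by ring,
    show D * (B / m) = D * B / m from by ring,
    ← add_div, div_div_div_cancel_right₀,
    show A / m * (C / n) = A * C / (m * n) from by ring,
    show B / m * (D / n) = B * D / (m * n) from by ring,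
    ← add_div, div_div_div_cancel_right₀, mul_comm C A, mul_comm D B] <;>
    first | exact ha | exact hm | exact mul_ne_zero hm hn

/-- label conditionals of the partition distributions. -/
theorem stmt2 {X₁ X₂ : Type*} [Fintype X₁] [Fintype X₂] [Nonempty X₁] [Nonempty X₂]
    (Pi' Pj' : X₁ × X₂ × Fin 2 → ℝ) (hPi' : IsDist Pi') (hPj' : IsDist Pj')
    (hposi : ∀ x₁ x₂, 0 < margXY Pi' x₁ x₂) (hposj : ∀ x₁ x₂, 0 < margXY Pj' x₁ x₂)
    (hα0 : 0 < alphaP Pi' Pj') (hα1 : alphaP Pi' Pj' < 1)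
    (x₁ : X₁) (x₂ : X₂)
    (hden1 : 0 < ∑ y' : Fin 2, condY Pi' y' x₁ x₂ * condY Pj' y' x₁ x₂)
    (hden2 : 0 < ∑ y' : Fin 2, condY Pi' (1 - y') x₁ x₂ * condY Pj' y' x₁ x₂) :
    ∀ y : Fin 2,
      condY (partC Pi' Pj') y x₁ x₂
        = condY Pi' y x₁ x₂ * condY Pj' y x₁ x₂
            / ∑ y' : Fin 2, condY Pi' y' x₁ x₂ * condY Pj' y' x₁ x₂ ∧
      condY (partW Pi' Pj') y x₁ x₂
        = condY Pi' (1 - y) x₁ x₂ * condY Pj' y x₁ x₂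
            / ∑ y' : Fin 2, condY Pi' (1 - y') x₁ x₂ * condY Pj' y' x₁ x₂ := by
  intro y
  have hmi := hposi x₁ x₂
  have hmj := hposj x₁ x₂
  have hα1' : 0 < 1 - alphaP Pi' Pj' := by linarith
  simp only [margXY] at hmi hmj
  fin_cases y <;>
    simp only [condY, partC, partW, margXY, Fin.sum_univ_two, Fin.mk_zero, Fin.mk_one,
      show (1 : Fin 2) - 0 = 1 by decide, show (1 : Fin 2) - 1 = 0 by decide] <;>
    refine ⟨?_, ?_⟩
  · exact stmt2_aux1 _ _ _ _ _ _ _ hmi.ne' hmj.ne' hα0.ne'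
  · exact stmt2_aux1 _ _ _ _ _ _ _ hmi.ne' hmj.ne' hα1'.ne'
  · exact stmt2_aux2 _ _ _ _ _ _ _ hmi.ne' hmj.ne' hα0.ne'
  · exact stmt2_aux2 _ _ _ _ _ _ _ hmi.ne' hmj.ne' hα1'.ne'
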